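/- Let a(x) ∈ ℚ(x). The equation y' + a(x)·y = 0 has a nonzero rational solution in ℚ̄(x) if and only if a(x) has at most simple poles with integer residues at every point of ℚ̄ and a(x) vanishes at infinity. -/

import Mathlib

open Polynomial

/-- Formal derivative of a rational function, via the quotient rule on the
canonical numerator/denominator representation. -/
noncomputable def rderiv {F : Type*} [Field F] (f : RatFunc F) : RatFunc F :=
  algebraMap (Polynomial F) (RatFunc F)
      (Polynomial.derivative f.num * f.denom - f.num * Polynomial.derivative f.denom) /
    algebraMap (Polynomial F) (RatFunc F) (f.denom ^ 2)

/-- Base change of a rational function along a field embedding `f : F →+* L`. -/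
noncomputable def liftRF {F L : Type*} [Field F] [Field L] (f : F →+* L)
    (b : RatFunc F) : RatFunc L :=
  algebraMap (Polynomial L) (RatFunc L) (b.num.map f) /
    algebraMap (Polynomial L) (RatFunc L) (b.denom.map f)

variable {F : Type*} [Field F]

theorem rderiv_div (p q : Polynomial F) (hq : q ≠ 0) :
    rderiv (algebraMap (Polynomial F) (RatFunc F) p / algebraMap _ _ q) =
    algebraMap (Polynomial F) (RatFunc F) (derivative p * q - p * derivative q) /
      algebraMap _ _ (q ^ 2) := by
  set f := algebraMap (Polynomial F) (RatFunc F) p / algebraMap _ _ q with hfdef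
  have hd : f.denom ≠ 0 := f.denom_ne_zero
  have hcross : f.num * q = p * f.denom := by
    apply RatFunc.algebraMap_injective F
    have h := f.num_div_denom
    rw [hfdef, div_eq_div_iff (RatFunc.algebraMap_ne_zero f.denom_ne_zero)
      (RatFunc.algebraMap_ne_zero hq)] at h
    rw [map_mul, map_mul]
    exact h
  have hder := congrArg derivative hcross
  simp only [derivative_mul] at hder
  have key : (derivative f.num * f.denom - f.num * derivative f.denom) * q ^ 2 =
      (derivative p * q - p * derivative q) * f.denom ^ 2 := by
    linear_combination (f.denom * q) * hder -
      (derivative f.denom * q + f.denom * derivative q) * hcross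
  rw [rderiv, div_eq_div_iff (RatFunc.algebraMap_ne_zero (pow_ne_zero 2 hd))
    (RatFunc.algebraMap_ne_zero (pow_ne_zero 2 hq)), ← map_mul, ← map_mul, key]

theorem rderiv_algebraMap (p : Polynomial F) :
    rderiv (algebraMap (Polynomial F) (RatFunc F) p) =
      algebraMap (Polynomial F) (RatFunc F) (derivative p) := by
  rw [rderiv, RatFunc.num_algebraMap, RatFunc.denom_algebraMap]
  simp

theorem rderiv_mul' (p q r s : Polynomial F) (hq : q ≠ 0) (hs : s ≠ 0) :
    rderiv (algebraMap (Polynomial F) (RatFunc F) p / algebraMap _ _ q *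
        (algebraMap (Polynomial F) (RatFunc F) r / algebraMap _ _ s)) =
      rderiv (algebraMap (Polynomial F) (RatFunc F) p / algebraMap _ _ q) *
          (algebraMap (Polynomial F) (RatFunc F) r / algebraMap _ _ s) +
        algebraMap (Polynomial F) (RatFunc F) p / algebraMap _ _ q *
          rderiv (algebraMap (Polynomial F) (RatFunc F) r / algebraMap _ _ s) := by
  rw [div_mul_div_comm, ← map_mul, ← map_mul, rderiv_div _ _ (mul_ne_zero hq hs),
    rderiv_div p q hq, rderiv_div r s hs]
  simp only [derivative_mul]
  have hq' : algebraMap (Polynomial F) (RatFunc F) q ≠ 0 := RatFunc.algebraMap_ne_zero hq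
  have hs' : algebraMap (Polynomial F) (RatFunc F) s ≠ 0 := RatFunc.algebraMap_ne_zero hs
  field_simp
  simp only [map_sub, map_mul, map_add, map_pow, map_neg]
  ring

theorem rderiv_mul (f g : RatFunc F) : rderiv (f * g) = rderiv f * g + f * rderiv g := by
  rw [← RatFunc.num_div_denom f, ← RatFunc.num_div_denom g]
  exact rderiv_mul' f.num f.denom g.num g.denom f.denom_ne_zero g.denom_ne_zero

/-- logarithmic derivative -/
noncomputable def ld (f : RatFunc F) : RatFunc F := rderiv f / f

theorem rderiv_eq_ld_mul {f : RatFunc F} (hf : f ≠ 0) : rderiv f = ld f * f := by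
  rw [ld, div_mul_cancel₀ _ hf]

theorem ld_mul {f g : RatFunc F} (hf : f ≠ 0) (hg : g ≠ 0) :
    ld (f * g) = ld f + ld g := by
  rw [ld, rderiv_mul, rderiv_eq_ld_mul hf, rderiv_eq_ld_mul hg]
  field_simp

theorem ld_one : ld (1 : RatFunc F) = 0 := by
  have : (1 : RatFunc F) = algebraMap (Polynomial F) (RatFunc F) 1 := (map_one _).symm
  rw [ld, this, rderiv_algebraMap]
  simp

theorem ld_inv (f : RatFunc F) : ld f⁻¹ = -ld f := by
  rcases eq_or_ne f 0 with rfl | hf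
  · simp [ld]
  · have h := ld_mul hf (inv_ne_zero hf)
    rw [mul_inv_cancel₀ hf, ld_one] at h
    linear_combination -h

theorem X_sub_C_ne_zero' (c : F) : (RatFunc.X - RatFunc.C c : RatFunc F) ≠ 0 := by
  have h : (RatFunc.X - RatFunc.C c : RatFunc F) =
      algebraMap (Polynomial F) (RatFunc F) (X - Polynomial.C c) := by
    rw [map_sub, RatFunc.algebraMap_X, RatFunc.algebraMap_C]
  rw [h]
  exact RatFunc.algebraMap_ne_zero (X_sub_C_ne_zero c)

theorem ld_X_sub_C (c : F) :
    ld (RatFunc.X - RatFunc.C c : RatFunc F) = (RatFunc.X - RatFunc.C c)⁻¹ := by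
  have h : (RatFunc.X - RatFunc.C c : RatFunc F) =
      algebraMap (Polynomial F) (RatFunc F) (X - Polynomial.C c) := by
    rw [map_sub, RatFunc.algebraMap_X, RatFunc.algebraMap_C]
  rw [ld, h, rderiv_algebraMap]
  simp [one_div]

theorem ld_C (c : F) : ld (RatFunc.C c : RatFunc F) = 0 := by
  have h : (RatFunc.C c : RatFunc F) = algebraMap (Polynomial F) (RatFunc F) (Polynomial.C c) :=
    (RatFunc.algebraMap_C c).symm
  rw [ld, h, rderiv_algebraMap]
  simp

theorem ld_pow (f : RatFunc F) (hf : f ≠ 0) (k : ℕ) : ld (f ^ k) = k • ld f := by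
  induction k with
  | zero => simpa using ld_one
  | succ k ih =>
    rw [pow_succ, ld_mul (pow_ne_zero k hf) hf, ih, succ_nsmul]

theorem ld_zpow (f : RatFunc F) (hf : f ≠ 0) (k : ℤ) : ld (f ^ k) = k • ld f := by
  rcases k with k | k
  · rw [Int.ofNat_eq_coe, zpow_natCast, ld_pow f hf k, natCast_zsmul]
  · rw [zpow_negSucc, ld_inv, ld_pow f hf, negSucc_zsmul]

theorem prod_XC_ne_zero (s : Multiset F) :
    ((s.map fun r => RatFunc.X - RatFunc.C r).prod : RatFunc F) ≠ 0 :=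
  Multiset.prod_ne_zero (by
    simp only [Multiset.mem_map]
    rintro ⟨r, -, hr⟩
    exact X_sub_C_ne_zero' r hr)

theorem ld_multiset_prod (s : Multiset F) :
    ld ((s.map fun r => RatFunc.X - RatFunc.C r).prod) =
      (s.map fun r => (RatFunc.X - RatFunc.C r)⁻¹).sum := by
  induction s using Multiset.induction with
  | empty => simpa using ld_one
  | cons a s ih =>
    rw [Multiset.map_cons, Multiset.map_cons, Multiset.prod_cons, Multiset.sum_cons,
      ld_mul (X_sub_C_ne_zero' a) (prod_XC_ne_zero s), ld_X_sub_C, ih]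

theorem ld_algebraMap_of_ne {K : Type*} [Field K] [IsAlgClosed K] (p : Polynomial K)
    (hp : p ≠ 0) :
    ld (algebraMap (Polynomial K) (RatFunc K) p) =
      (p.roots.map fun r => (RatFunc.X - RatFunc.C r)⁻¹).sum := by
  have hsplit : p.roots.card = p.natDegree :=
    splits_iff_card_roots.mp (IsAlgClosed.splits p)
  have hfac := C_leadingCoeff_mul_prod_multiset_X_sub_C hsplit
  conv_lhs => rw [← hfac]
  rw [map_mul]
  have h1 : algebraMap (Polynomial K) (RatFunc K) (Polynomial.C p.leadingCoeff) =
      RatFunc.C p.leadingCoeff := RatFunc.algebraMap_C _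
  have h2 : algebraMap (Polynomial K) (RatFunc K) ((p.roots.map fun a => X - Polynomial.C a).prod)
      = ((p.roots.map fun r => RatFunc.X - RatFunc.C r)).prod := by
    rw [map_multiset_prod, Multiset.map_map]
    congr 1
    apply Multiset.map_congr rfl
    intro r _
    simp [map_sub, RatFunc.algebraMap_X, RatFunc.algebraMap_C]
  have hC : (RatFunc.C p.leadingCoeff : RatFunc K) ≠ 0 := by
    rw [← h1]
    exact RatFunc.algebraMap_ne_zero (Polynomial.C_ne_zero.mpr (leadingCoeff_ne_zero.mpr hp))
  rw [h1, h2, ld_mul hC (prod_XC_ne_zero p.roots), ld_C, ld_multiset_prod, zero_add]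

theorem ld_prod {ι : Type*} (s : Finset ι) (h : ι → RatFunc F) (hh : ∀ i ∈ s, h i ≠ 0) :
    ld (∏ i ∈ s, h i) = ∑ i ∈ s, ld (h i) := by
  classical
  induction s using Finset.induction with
  | empty => simpa using ld_one
  | insert x s' hx ih =>
    rw [Finset.prod_insert hx, Finset.sum_insert hx,
      ld_mul (hh x (Finset.mem_insert_self x s'))
        (Finset.prod_ne_zero_iff.mpr fun i hi => hh i (Finset.mem_insert_of_mem hi)),
      ih fun i hi => hh i (Finset.mem_insert_of_mem hi)]

theorem intCast_smul_eq_C_mul {K : Type*} [Field K] (n : ℤ) (x : RatFunc K) :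
    n • x = RatFunc.C ((n : K)) * x := by
  rw [zsmul_eq_mul, ← map_intCast (RatFunc.C : K →+* RatFunc K) n]


/-- Let `a(x) ∈ ℚ(x)`.  The equation `y' + a(x)y = 0` has a nonzero rational solution
in `ℚ̄(x)` if and only if `a(x)` has at most simple poles with integer residues at
every point of `ℚ̄` and vanishes at infinity; i.e. iff `a(x) = ∑ᵢ nᵢ/(x − aᵢ)` with
the `aᵢ` distinct points of `ℚ̄` and `nᵢ ∈ ℤ`. -/
theorem order_one_rational_solution_char_zero (a : RatFunc ℚ) :
    (∃ f : RatFunc (AlgebraicClosure ℚ), f ≠ 0 ∧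
        rderiv f + liftRF (algebraMap ℚ (AlgebraicClosure ℚ)) a * f = 0) ↔
      ∃ (m : ℕ) (c : Fin m → AlgebraicClosure ℚ) (n : Fin m → ℤ),
        Function.Injective c ∧
        liftRF (algebraMap ℚ (AlgebraicClosure ℚ)) a =
          ∑ i : Fin m,
            RatFunc.C ((n i : AlgebraicClosure ℚ)) *
              (RatFunc.X - RatFunc.C (c i))⁻¹ := by
  classical
  set K := AlgebraicClosure ℚ
  set b := liftRF (algebraMap ℚ K) a with hbdef
  constructor
  · rintro ⟨f, hf, heq⟩
    have hld : ld f = -b := by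
      have h1 : rderiv f = -b * f := by linear_combination heq
      rw [ld, h1, mul_div_assoc, div_self hf, mul_one]
    have hnum0 : f.num ≠ 0 := RatFunc.num_ne_zero hf
    have hsplitf : ld f = ld (algebraMap (Polynomial K) (RatFunc K) f.num) -
        ld (algebraMap (Polynomial K) (RatFunc K) f.denom) := by
      conv_lhs => rw [← f.num_div_denom]
      rw [div_eq_mul_inv,
        ld_mul (RatFunc.algebraMap_ne_zero hnum0)
          (inv_ne_zero (RatFunc.algebraMap_ne_zero f.denom_ne_zero)),
        ld_inv, sub_eq_add_neg]
    set g : K → RatFunc K := fun r => (RatFunc.X - RatFunc.C r)⁻¹ with hg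
    have hb2 : b = (f.denom.roots.map g).sum - (f.num.roots.map g).sum := by
      have := hsplitf
      rw [hld, ld_algebraMap_of_ne _ hnum0, ld_algebraMap_of_ne _ f.denom_ne_zero] at this
      linear_combination -this
    set S : Finset K := f.num.roots.toFinset ∪ f.denom.roots.toFinset with hS
    set N : K → ℤ := fun r => (f.denom.roots.count r : ℤ) - (f.num.roots.count r : ℤ) with hN
    have hcount : ∀ (msub : Multiset K), msub.toFinset ⊆ S →
        (msub.map g).sum = ∑ r ∈ S, (msub.count r : ℤ) • g r := by
      intro msub hsub
      rw [Finset.sum_multiset_map_count]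
      rw [Finset.sum_subset hsub]
      · apply Finset.sum_congr rfl
        intro r _
        rw [natCast_zsmul]
      · intro r _ hr
        rw [Multiset.count_eq_zero_of_notMem (fun hm => hr (Multiset.mem_toFinset.mpr hm))]
        simp
    have hb3 : b = ∑ r ∈ S, (N r) • g r := by
      rw [hb2, hcount f.denom.roots Finset.subset_union_right,
        hcount f.num.roots Finset.subset_union_left, ← Finset.sum_sub_distrib]
      apply Finset.sum_congr rfl
      intro r _
      rw [hN, sub_smul]
    refine ⟨S.card, fun i => ((S.equivFin.symm i : S) : K), fun i => N ((S.equivFin.symm i : S) : K),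
      Subtype.val_injective.comp S.equivFin.symm.injective, ?_⟩
    rw [hb3, ← Finset.sum_coe_sort S (fun r => N r • g r),
      ← Equiv.sum_comp S.equivFin.symm (fun x : S => N (x : K) • g (x : K))]
    apply Finset.sum_congr rfl
    intro i _
    rw [intCast_smul_eq_C_mul]
  · rintro ⟨m, c, n, hinj, hb⟩
    refine ⟨∏ i : Fin m, (RatFunc.X - RatFunc.C (c i)) ^ (-(n i)), ?_, ?_⟩
    · exact Finset.prod_ne_zero_iff.mpr fun i _ => zpow_ne_zero _ (X_sub_C_ne_zero' _)
    · have hf0 : (∏ i : Fin m, (RatFunc.X - RatFunc.C (c i)) ^ (-(n i)) : RatFunc K) ≠ 0 :=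
        Finset.prod_ne_zero_iff.mpr fun i _ => zpow_ne_zero _ (X_sub_C_ne_zero' _)
      have hldf : ld (∏ i : Fin m, (RatFunc.X - RatFunc.C (c i)) ^ (-(n i)) : RatFunc K) = -b := by
        rw [ld_prod _ _ fun i _ => zpow_ne_zero _ (X_sub_C_ne_zero' _)]
        rw [hb, ← Finset.sum_neg_distrib]
        apply Finset.sum_congr rfl
        intro i _
        rw [ld_zpow _ (X_sub_C_ne_zero' _), ld_X_sub_C, neg_zsmul, intCast_smul_eq_C_mul]
      rw [rderiv_eq_ld_mul hf0, hldf]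
      ring
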